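/- Fix n ≥ 1 and let Q(λ) = A_n λⁿ + ⋯ + A_1 λ + A_0 be a random real polynomial whose n+1 coefficients A_0, …, A_n are i.i.d. standard normal random variables. Then P(N⁻(Q) is odd) = 1/2, and consequently P(N⁻(Q) is even) = 1/2. -/

import Mathlib

open Polynomial MeasureTheory ProbabilityTheory

/-- The number of complex roots, counted with multiplicity, of a real polynomial
that have negative real part. -/
noncomputable def negRootCount (q : Polynomial ℝ) : ℕ :=
  Multiset.card ((q.map (algebraMap ℝ ℂ)).roots.filter fun z => z.re < 0)

/-- The random real polynomial `∑_{i=0}^{n} ω_i λ^i` built from coefficients `ω`. -/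
noncomputable def polyOfCoeffs {n : ℕ} (ω : Fin (n + 1) → ℝ) : Polynomial ℝ :=
  ∑ i : Fin (n + 1), Polynomial.C (ω i) * Polynomial.X ^ (i : ℕ)

open Complex


lemma multiset_sign_prod (S : Multiset ℂ) (hconj : S.map (starRingEnd ℂ) = S)
    (h0 : (0:ℂ) ∉ S) :
    S.prod.im = 0 ∧ (0 < S.prod.re ↔ Even (Multiset.card (S.filter fun z => z.re < 0))) := by
  induction S using Multiset.strongInductionOn with
  | ih S ih =>
  rcases Multiset.empty_or_exists_mem S with rfl | ⟨a, ha⟩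
  · simp
  have hinj : Function.Injective (starRingEnd ℂ) := (starRingEnd ℂ).injective
  have hane : a ≠ 0 := fun h => h0 (h ▸ ha)
  by_cases him : a.im = 0
  · -- a is real
    set S' := S.erase a with hS'
    have hcons : a ::ₘ S' = S := Multiset.cons_erase ha
    have hlt : S' < S := Multiset.erase_lt.mpr ha
    have hca : (starRingEnd ℂ) a = a := Complex.conj_eq_iff_im.mpr him
    have hconj' : S'.map (starRingEnd ℂ) = S' := by
      rw [hS', Multiset.map_erase _ hinj, hca, hconj]
    have h0' : (0:ℂ) ∉ S' := fun h => h0 (Multiset.mem_of_mem_erase h)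
    obtain ⟨him', hre'⟩ := ih S' hlt hconj' h0'
    have hp' : S'.prod ≠ 0 := Multiset.prod_ne_zero h0'
    have hre'ne : S'.prod.re ≠ 0 := by
      intro h; exact hp' (Complex.ext h him')
    have hprod : S.prod = a * S'.prod := by rw [← hcons, Multiset.prod_cons]
    have hprodim : S.prod.im = 0 := by
      rw [hprod, Complex.mul_im, him', him]; ring
    have hprodre : S.prod.re = a.re * S'.prod.re := by
      rw [hprod, Complex.mul_re, him', him]; ring
    have hfilt : (S.filter fun z => z.re < 0) =
        if a.re < 0 then a ::ₘ (S'.filter fun z => z.re < 0) else S'.filter fun z => z.re < 0 := by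
      rw [← hcons, Multiset.filter_cons]
      split <;> simp_all
    have hare : a.re ≠ 0 := by
      intro h; exact hane (Complex.ext h him)
    refine ⟨hprodim, ?_⟩
    rw [hprodre, hfilt]
    rcases lt_or_gt_of_ne hare with h | h
    · simp only [if_pos h, Multiset.card_cons, Nat.even_add_one, ← hre']
      constructor
      · intro hp hpos; nlinarith
      · intro hnp; rcases lt_or_gt_of_ne hre'ne with h2 | h2
        · nlinarith
        · exact absurd h2 hnp
    · rw [if_neg (by linarith), ← hre']
      constructor
      · intro hp; nlinarith
      · intro hp; nlinarith
  · -- a is not real; pair with conjugate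
    set c := starRingEnd ℂ with hc
    have hca : c a ≠ a := fun h => him (Complex.conj_eq_iff_im.mp h)
    have hcmem : c a ∈ S := by
      have : Multiset.count (c a) S = Multiset.count a S := by
        conv_lhs => rw [← hconj]
        rw [Multiset.count_map_eq_count' _ _ hinj]
      rw [← Multiset.count_pos, this, Multiset.count_pos]; exact ha
    have hcmem' : c a ∈ S.erase a := (Multiset.mem_erase_of_ne hca).mpr hcmem
    set S'' := (S.erase a).erase (c a) with hS''
    have hcons : a ::ₘ c a ::ₘ S'' = S := by
      rw [hS'', Multiset.cons_erase hcmem', Multiset.cons_erase ha]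
    have hlt : S'' < S := lt_of_le_of_lt (Multiset.erase_le _ _) (Multiset.erase_lt.mpr ha)
    have hconj'' : S''.map c = S'' := by
      rw [hS'', Multiset.map_erase _ hinj, Multiset.map_erase _ hinj, hconj]
      rw [show c (c a) = a from Complex.conj_conj a, Multiset.erase_comm]
    have h0'' : (0:ℂ) ∉ S'' := fun h =>
      h0 (Multiset.mem_of_mem_erase (Multiset.mem_of_mem_erase h))
    obtain ⟨him'', hre''⟩ := ih S'' hlt hconj'' h0''
    have hp'' : S''.prod ≠ 0 := Multiset.prod_ne_zero h0''
    have hre''ne : S''.prod.re ≠ 0 := fun h => hp'' (Complex.ext h him'')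
    have hprod : S.prod = (Complex.normSq a : ℝ) * S''.prod := by
      rw [← hcons, Multiset.prod_cons, Multiset.prod_cons, ← mul_assoc, Complex.mul_conj]
    have hnsq : 0 < Complex.normSq a := Complex.normSq_pos.mpr hane
    constructor
    · rw [hprod, Complex.mul_im, Complex.ofReal_re, Complex.ofReal_im, him'']; ring
    · rw [hprod, Complex.mul_re, Complex.ofReal_re, Complex.ofReal_im, him'', mul_zero, sub_zero]
      have hcare : (c a).re = a.re := Complex.conj_re a
      have hfilt : Multiset.card (S.filter fun z => z.re < 0) =
          Multiset.card (S''.filter fun z => z.re < 0) + (if a.re < 0 then 2 else 0) := by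
        rw [← hcons, Multiset.filter_cons, Multiset.filter_cons, hcare]
        split <;> simp [Multiset.card_cons]
      rw [hfilt]
      have : (0 < Complex.normSq a * S''.prod.re ↔ 0 < S''.prod.re) := by
        constructor <;> intro h <;> nlinarith
      rw [this, hre'']
      split <;> simp [Nat.even_add]



lemma coeff_polyOfCoeffs {n : ℕ} (ω : Fin (n+1) → ℝ) (k : ℕ) :
    (polyOfCoeffs ω).coeff k = if h : k < n + 1 then ω ⟨k, h⟩ else 0 := by
  simp only [polyOfCoeffs, Polynomial.finset_sum_coeff, Polynomial.coeff_C_mul,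
    Polynomial.coeff_X_pow, mul_ite, mul_one, mul_zero]
  split
  · next h =>
    rw [Finset.sum_eq_single (⟨k, h⟩ : Fin (n+1))]
    · simp
    · intro b _ hb
      rw [if_neg]
      intro hbk
      exact hb (Fin.ext hbk.symm)
    · simp
  · next h =>
    apply Finset.sum_eq_zero
    intro b _
    rw [if_neg]
    intro hbk
    exact h (hbk ▸ b.isLt)

lemma natDegree_polyOfCoeffs {n : ℕ} (ω : Fin (n+1) → ℝ) (hn : ω (Fin.last n) ≠ 0) :
    (polyOfCoeffs ω).natDegree = n := by
  apply le_antisymm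
  · rw [Polynomial.natDegree_le_iff_coeff_eq_zero]
    intro k hk
    rw [coeff_polyOfCoeffs, dif_neg (by omega)]
  · apply Polynomial.le_natDegree_of_ne_zero
    rw [coeff_polyOfCoeffs, dif_pos (by omega)]
    exact hn

lemma even_iff_pos {n : ℕ} (ω : Fin (n+1) → ℝ) (h0 : ω 0 ≠ 0) (hn : ω (Fin.last n) ≠ 0) :
    (Even (Multiset.card (((polyOfCoeffs ω).map (algebraMap ℝ ℂ)).roots.filter
        fun z => z.re < 0))
      ↔ 0 < ((-1:ℝ)^n * ω 0) * ω (Fin.last n)) := by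
  set q := polyOfCoeffs ω with hq
  set P := q.map (algebraMap ℝ ℂ) with hP
  have hc0 : q.coeff 0 = ω 0 := by
    rw [coeff_polyOfCoeffs, dif_pos (Nat.succ_pos n)]; rfl
  have hcn : q.coeff n = ω (Fin.last n) := by
    rw [coeff_polyOfCoeffs, dif_pos (Nat.lt_succ_self n)]; rfl
  have hqdeg : q.natDegree = n := natDegree_polyOfCoeffs ω hn
  have hPdeg : P.natDegree = n := by rw [hP, Polynomial.natDegree_map, hqdeg]
  have hq0 : q ≠ 0 := fun h => h0 (by rw [← hc0, h, Polynomial.coeff_zero])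
  have hP0 : P ≠ 0 := by
    rw [hP, Ne, Polynomial.map_eq_zero_iff (algebraMap ℝ ℂ).injective]
    exact hq0
  have hPlead : P.leadingCoeff = (ω (Fin.last n) : ℂ) := by
    rw [Polynomial.leadingCoeff, hPdeg, hP, Polynomial.coeff_map, hcn]; rfl
  have hPc0 : P.coeff 0 = (ω 0 : ℂ) := by
    rw [hP, Polynomial.coeff_map, hc0]; rfl
  have hsplit : P.Splits := IsAlgClosed.splits P
  have hcard : Multiset.card P.roots = n := by
    rw [Polynomial.splits_iff_card_roots.mp hsplit, hPdeg]
  -- conjugation invariance of the roots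
  have hmapconj : P.map (starRingEnd ℂ) = P := by
    rw [hP, Polynomial.map_map]
    congr 1
    ext r
    simp [Complex.conj_ofReal]
  have hconj : P.roots.map (starRingEnd ℂ) = P.roots := by
    conv_rhs => rw [← hmapconj]
    rw [hsplit.roots_map_of_injective (starRingEnd ℂ).injective]
  have h0mem : (0:ℂ) ∉ P.roots := by
    intro h
    have := Polynomial.isRoot_of_mem_roots h
    rw [Polynomial.IsRoot, ← Polynomial.coeff_zero_eq_eval_zero, hPc0] at this
    exact h0 (by exact_mod_cast this)
  -- product of roots
  have key : P.coeff 0 = P.leadingCoeff * ((-1)^n * P.roots.prod) := by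
    conv_lhs => rw [hsplit.eq_prod_roots]
    rw [Polynomial.coeff_zero_eq_eval_zero, Polynomial.eval_mul, Polynomial.eval_C,
      Polynomial.eval_multiset_prod, Multiset.map_map]
    congr 1
    simp only [Function.comp_apply, Polynomial.eval_sub, Polynomial.eval_X,
      Polynomial.eval_C, zero_sub]
    rw [show (fun x => -x) = (Neg.neg : ℂ → ℂ) from rfl, Multiset.prod_map_neg, hcard]
  have he : ((-1:ℝ)^n) * ((-1:ℝ)^n) = 1 := by
    rw [← pow_add, ← two_mul, pow_mul]; norm_num
  obtain ⟨him0, hiff⟩ := multiset_sign_prod P.roots hconj h0mem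
  rw [hPc0, hPlead] at key
  have hcast : ((-1:ℂ))^n = ((((-1:ℝ))^n : ℝ) : ℂ) := by push_cast; ring
  have hEre : ((-1:ℂ)^n).re = (-1:ℝ)^n := by rw [hcast, Complex.ofReal_re]
  have hEim : ((-1:ℂ)^n).im = 0 := by rw [hcast, Complex.ofReal_im]
  have hkey' : (ω 0 : ℝ) = ω (Fin.last n) * ((-1:ℝ)^n * P.roots.prod.re) := by
    have h := congrArg Complex.re key
    simp only [Complex.mul_re, Complex.mul_im, Complex.ofReal_re, Complex.ofReal_im,
      hEre, hEim, him0, mul_zero, zero_mul, sub_zero, add_zero] at h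
    linarith [h]
  have h2 : ((-1:ℝ)^n * ω 0) * ω (Fin.last n) = ω (Fin.last n)^2 * P.roots.prod.re := by
    linear_combination ((-1:ℝ)^n * ω (Fin.last n)) * hkey'
      + (ω (Fin.last n)^2 * P.roots.prod.re) * he
  have hsq : 0 < ω (Fin.last n)^2 := by positivity
  rw [← hiff, h2]
  constructor
  · intro h; nlinarith
  · intro h; nlinarith


lemma gauss_zero : (gaussianReal 0 1) {0} = 0 :=
  gaussianReal_absolutelyContinuous 0 one_ne_zero (measure_singleton 0)

lemma gauss_neg : MeasurePreserving (fun x : ℝ => -x) (gaussianReal 0 1) (gaussianReal 0 1) := by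
  refine ⟨measurable_neg, ?_⟩
  have h : (fun x : ℝ => -x) = (fun x : ℝ => (-1 : ℝ) * x) := by funext x; ring
  rw [h, gaussianReal_map_const_mul]
  norm_num

lemma coord_zero_null {n : ℕ} (i : Fin (n+1)) :
    (Measure.pi fun _ : Fin (n+1) => gaussianReal 0 1) {ω | ω i = 0} = 0 := by
  classical
  have hset : {ω : Fin (n+1) → ℝ | ω i = 0} =
      Set.pi Set.univ (fun j => if j = i then ({0} : Set ℝ) else Set.univ) := by
    ext ω
    simp only [Set.mem_setOf_eq, Set.mem_pi, Set.mem_univ, forall_true_left]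
    constructor
    · intro h j
      by_cases hj : j = i
      · subst hj; simp [h]
      · simp [hj]
    · intro h
      have := h i
      simpa using this
  rw [hset, Measure.pi_pi]
  apply Finset.prod_eq_zero (Finset.mem_univ i)
  simp [gauss_zero]

/-- For a random real polynomial of degree `n ≥ 1` with i.i.d. standard normal
coefficients, `P(N⁻(Q)` is odd`) = 1/2` and `P(N⁻(Q)` is even`) = 1/2`. -/
theorem stmt_8 (n : ℕ) (hn : 1 ≤ n) :
    (Measure.pi fun _ : Fin (n + 1) => gaussianReal 0 1)
        {ω | Odd (negRootCount (polyOfCoeffs ω))} = 1 / 2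
    ∧ (Measure.pi fun _ : Fin (n + 1) => gaussianReal 0 1)
        {ω | Even (negRootCount (polyOfCoeffs ω))} = 1 / 2 := by
  classical
  set μ := Measure.pi fun _ : Fin (n + 1) => gaussianReal 0 1 with hμ
  set x : (Fin (n+1) → ℝ) → ℝ := fun ω => ((-1:ℝ)^n * ω 0) * ω (Fin.last n) with hx
  have hxmeas : Measurable x :=
    (measurable_const.mul (measurable_pi_apply 0)).mul (measurable_pi_apply _)
  set F := {ω | x ω < 0} with hF
  set G := {ω | 0 < x ω} with hG
  have hFmeas : MeasurableSet F := measurableSet_lt hxmeas measurable_const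
  have hGmeas : MeasurableSet G := measurableSet_lt measurable_const hxmeas
  have h1 : ∀ᵐ ω ∂μ, ω 0 ≠ 0 := by
    rw [ae_iff]
    simpa using coord_zero_null (0 : Fin (n+1))
  have h2 : ∀ᵐ ω ∂μ, ω (Fin.last n) ≠ 0 := by
    rw [ae_iff]
    simpa using coord_zero_null (Fin.last n)
  have hxne : ∀ ω : Fin (n+1) → ℝ, ω 0 ≠ 0 → ω (Fin.last n) ≠ 0 → x ω ≠ 0 := fun ω hω0 hωn =>
    mul_ne_zero (mul_ne_zero (pow_ne_zero _ (by norm_num)) hω0) hωn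
  have heven : ∀ ω : Fin (n+1) → ℝ, ω 0 ≠ 0 → ω (Fin.last n) ≠ 0 →
      (Even (negRootCount (polyOfCoeffs ω)) ↔ 0 < x ω) := by
    intro ω hω0 hωn
    exact even_iff_pos ω hω0 hωn
  have hEodd : μ {ω | Odd (negRootCount (polyOfCoeffs ω))} = μ F := by
    apply measure_congr
    rw [Filter.eventuallyEq_set]
    filter_upwards [h1, h2] with ω hω0 hωn
    simp only [Set.mem_setOf_eq, hF]
    rw [Nat.not_even_iff_odd.symm, heven ω hω0 hωn, not_lt]
    exact ⟨fun h' => h'.lt_of_ne (hxne ω hω0 hωn), le_of_lt⟩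
  have hEeven : μ {ω | Even (negRootCount (polyOfCoeffs ω))} = μ G := by
    apply measure_congr
    rw [Filter.eventuallyEq_set]
    filter_upwards [h1, h2] with ω hω0 hωn
    simpa only [Set.mem_setOf_eq, hG] using heven ω hω0 hωn
  let f : Fin (n+1) → ℝ → ℝ := fun i => if i = 0 then (fun x => -x) else id
  have hT : MeasurePreserving (fun ω (i : Fin (n+1)) => f i (ω i)) μ μ := by
    apply measurePreserving_pi
    intro i
    by_cases hi : i = 0
    · simpa [f, hi] using gauss_neg
    · simpa [f, hi] using MeasurePreserving.id _
  have hne0 : (Fin.last n) ≠ 0 := by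
    simp only [Ne, Fin.ext_iff, Fin.val_last, Fin.val_zero]
    omega
  have hpre : (fun ω (i : Fin (n+1)) => f i (ω i)) ⁻¹' F = G := by
    ext ω
    have e0 : f 0 (ω 0) = -ω 0 := by simp [f]
    have e1 : f (Fin.last n) (ω (Fin.last n)) = ω (Fin.last n) := by simp [f, hne0]
    simp only [Set.mem_preimage, hF, hG, Set.mem_setOf_eq, hx, e0, e1]
    rw [show ((-1:ℝ)^n * -ω 0) * ω (Fin.last n) = -(((-1:ℝ)^n * ω 0) * ω (Fin.last n)) by ring,
      neg_lt_zero]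
  have hFG : μ F = μ G := by
    rw [← hT.measure_preimage hFmeas.nullMeasurableSet, hpre]
  have hdisj : Disjoint F G := by
    rw [Set.disjoint_left]
    intro ω hωF hωG
    simp only [hF, Set.mem_setOf_eq] at hωF
    simp only [hG, Set.mem_setOf_eq] at hωG
    linarith
  have hunion : μ (F ∪ G) = 1 := by
    have hae : (F ∪ G : Set (Fin (n+1) → ℝ)) =ᵐ[μ] (Set.univ : Set (Fin (n+1) → ℝ)) := by
      rw [Filter.eventuallyEq_set]
      filter_upwards [h1, h2] with ω hω0 hωn
      simp only [Set.mem_union, Set.mem_univ, iff_true, hF, hG, Set.mem_setOf_eq]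
      exact (hxne ω hω0 hωn).lt_or_gt
    rw [measure_congr hae, measure_univ]
  have hsum : 2 * μ F = 1 := by
    rw [two_mul]
    nth_rewrite 2 [hFG]
    rw [← measure_union hdisj hGmeas, hunion]
  have hF12 : μ F = 1/2 :=
    (ENNReal.eq_div_iff (by norm_num) (by norm_num)).mpr hsum
  exact ⟨hEodd.trans hF12, hEeven.trans (hFG.symm.trans hF12)⟩
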